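/- Let x, y be p-strings both starting with p-symbols, with ⟨x[2..]⟩ < ⟨y[2..]⟩ and e = lcp∞(⟨x[2..]⟩,⟨y[2..]⟩). If e < min{fce(x), fce(y)}, then ⟨x⟩ < ⟨y⟩, lcp(⟨x⟩,⟨y⟩) = lcp(⟨x[2..]⟩,⟨y[2..]⟩)+1 and lcp∞(⟨x⟩,⟨y⟩) = e+1. -/

import Mathlib

/-- Symbols of a parameterized string: static symbols `s a` (from Σs) and
parameter symbols `p a` (from Σp). -/
inductive PSym where
  | s : ℕ → PSym
  | p : ℕ → PSym
deriving DecidableEq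

/-- Symbols of a p-encoded string: static symbols, finite distances, and ∞. -/
inductive Enc where
  | s : ℕ → Enc
  | fin : ℕ → Enc
  | inf : Enc
deriving DecidableEq

/-- Order embedding: static symbols < natural numbers < ∞. -/
def Enc.toPair : Enc → ℕ ×ₗ ℕ
  | .s a => toLex (0, a)
  | .fin d => toLex (1, d)
  | .inf => toLex (2, 0)

instance : LinearOrder Enc :=
  LinearOrder.lift' Enc.toPair (by
    rintro (a | a | _) (b | b | _) h <;>
      simp_all [Enc.toPair, toLex_inj, Prod.ext_iff])

/-- Largest position `j < i` (0-based) carrying the same symbol as position `i`. -/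
def prevOcc (w : List PSym) (i : ℕ) : Option ℕ :=
  ((List.range i).filter (fun j => w[j]? = w[i]?)).max?

/-- The p-encoding of position `i` (0-based) of `w`. -/
def pencSym (w : List PSym) (i : ℕ) : Enc :=
  match w[i]? with
  | some (PSym.s a) => Enc.s a
  | some (PSym.p _) =>
    match prevOcc w i with
    | some j => Enc.fin (i - j)
    | none => Enc.inf
  | none => Enc.inf

/-- The p-encoding ⟨w⟩ of a p-string `w`. -/
def penc (w : List PSym) : List Enc :=
  (List.range w.length).map (pencSym w)

/-- Lexicographic (strict) order on p-encoded strings. -/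
def lexLt (x y : List Enc) : Prop := List.Lex (· < ·) x y

def lexLe (x y : List Enc) : Prop := lexLt x y ∨ x = y

/-- Length of the longest common prefix. -/
def lcp {α : Type*} [DecidableEq α] : List α → List α → ℕ
  | a :: x, b :: y => if a = b then lcp x y + 1 else 0
  | _, _ => 0

/-- Number of ∞'s in the longest common prefix of two p-encoded strings. -/
def lcpInf (x y : List Enc) : ℕ := (x.take (lcp x y)).count Enc.inf

/-- Number of distinct p-symbols occurring in `w` (denoted |w|_p). -/
def distinctP (w : List PSym) : ℕ :=
  (w.filterMap (fun s => match s with | PSym.p a => some a | PSym.s _ => none)).dedup.length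

/-- For `w` starting with a p-symbol: the rank of `w[1]` among the distinct
p-symbols of `w[1..h+1]`, where `h+1 = min{|w|, second occurrence of w[1] in w}`. -/
def fceRank (w : List PSym) : ℕ :=
  match w with
  | [] => 0
  | c :: rest => distinctP ((c :: rest).take (min (c :: rest).length (2 + rest.idxOf c)))

/-- The function fce from the paper; `fce ε = $` is modelled as `Enc.s 0`. -/
def fce (w : List PSym) : Enc :=
  match w with
  | [] => Enc.s 0
  | PSym.s a :: _ => Enc.s a
  | w => Enc.fin (fceRank w)


/- ==================== auxiliary lemmas ==================== -/

lemma prevOcc_eq_none_iff (w : List PSym) (i : ℕ) :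
    prevOcc w i = none ↔ ∀ j < i, w[j]? ≠ w[i]? := by
  simp [prevOcc, List.max?_eq_none_iff, List.filter_eq_nil_iff, List.mem_range]

lemma prevOcc_eq_some_iff (w : List PSym) (i j : ℕ) :
    prevOcc w i = some j ↔
      j < i ∧ w[j]? = w[i]? ∧ ∀ k, k < i → w[k]? = w[i]? → k ≤ j := by
  rw [prevOcc, List.max?_eq_some_iff_legacy (le_refl) (fun a b => max_choice a b)
    (fun a b c => max_le_iff)]
  simp only [List.mem_filter, List.mem_range, decide_eq_true_eq]
  constructor
  · rintro ⟨⟨h1, h2⟩, h3⟩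
    exact ⟨h1, h2, fun k hk hw => h3 k ⟨hk, hw⟩⟩
  · rintro ⟨h1, h2, h3⟩
    exact ⟨⟨h1, h2⟩, fun k ⟨hk, hw⟩ => h3 k hk hw⟩

lemma prevOcc_cons_succ (c : PSym) (w : List PSym) (i : ℕ) :
    prevOcc (c :: w) (i + 1) =
      match prevOcc w i with
      | some j => some (j + 1)
      | none => if w[i]? = some c then some 0 else none := by
  cases h : prevOcc w i with
  | some j =>
    rw [prevOcc_eq_some_iff] at h
    obtain ⟨h1, h2, h3⟩ := h
    simp only []
    rw [prevOcc_eq_some_iff]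
    refine ⟨by omega, by simpa using h2, ?_⟩
    rintro (_ | k) hk hw
    · omega
    · simp only [List.getElem?_cons_succ] at hw
      have := h3 k (by omega) hw
      omega
  | none =>
    rw [prevOcc_eq_none_iff] at h
    by_cases hc : w[i]? = some c
    · simp only [hc, if_true]
      rw [prevOcc_eq_some_iff]
      refine ⟨by omega, by simpa using hc.symm, ?_⟩
      rintro (_ | k) hk hw
      · omega
      · simp only [List.getElem?_cons_succ] at hw
        exact absurd hw (h k (by omega))
    · simp only [if_neg hc]
      rw [prevOcc_eq_none_iff]
      rintro (_ | k) hk hw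
      · simp only [List.getElem?_cons_zero, List.getElem?_cons_succ] at hw
        exact hc hw.symm
      · simp only [List.getElem?_cons_succ] at hw
        exact h k (by omega) hw

/-- If the symbol at `i` is not a fresh copy of `c`, consing `c` doesn't change the encoding. -/
lemma pencSym_cons_succ_of (c : PSym) (w : List PSym) (i : ℕ)
    (h : ¬(w[i]? = some c ∧ prevOcc w i = none)) :
    pencSym (c :: w) (i + 1) = pencSym w i := by
  unfold pencSym
  rw [List.getElem?_cons_succ, prevOcc_cons_succ]
  cases hw : w[i]? with
  | none => rfl
  | some s =>
    cases s with
    | s a => rfl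
    | p a =>
      cases hp : prevOcc w i with
      | some j =>
        simp only [hp]
        congr 1
        omega
      | none =>
        simp only [hp]
        have : ¬ w[i]? = some c := fun hh => h ⟨hh, hp⟩
        rw [hw] at this
        rw [if_neg this]

lemma pencSym_cons_succ_fresh (a : ℕ) (w : List PSym) (i : ℕ)
    (h1 : w[i]? = some (PSym.p a)) (h2 : prevOcc w i = none) :
    pencSym (PSym.p a :: w) (i + 1) = Enc.fin (i + 1) := by
  unfold pencSym
  rw [List.getElem?_cons_succ, prevOcc_cons_succ, h1, h2]
  simp

lemma penc_length (w : List PSym) : (penc w).length = w.length := by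
  simp [penc]

lemma penc_getElem?_of_lt (w : List PSym) (i : ℕ) (h : i < w.length) :
    (penc w)[i]? = some (pencSym w i) := by
  simp [penc, List.getElem?_map, List.getElem?_range h]

lemma pencSym_take (w : List PSym) (k i : ℕ) (h : i < k) :
    pencSym (w.take k) i = pencSym w i := by
  have hget : ∀ j, j ≤ i → (w.take k)[j]? = w[j]? := by
    intro j hj
    rw [List.getElem?_take, if_pos (by omega)]
  have hprev : prevOcc (w.take k) i = prevOcc w i := by
    unfold prevOcc
    congr 1
    apply List.filter_congr
    intro j hj
    rw [List.mem_range] at hj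
    rw [hget j (by omega), hget i le_rfl]
  unfold pencSym
  rw [hget i le_rfl, hprev]

lemma penc_take (w : List PSym) (k : ℕ) :
    (penc w).take k = penc (w.take k) := by
  unfold penc
  rw [← List.map_take, List.take_range, List.length_take]
  apply List.map_congr_left
  intro i hi
  rw [List.mem_range] at hi
  exact (pencSym_take w k i (lt_of_lt_of_le hi (by omega))).symm

/-- The parameter names occurring in `w`. -/
def params (w : List PSym) : List ℕ :=
  w.filterMap (fun s => match s with | PSym.p a => some a | PSym.s _ => none)

lemma mem_params (w : List PSym) (a : ℕ) : a ∈ params w ↔ PSym.p a ∈ w := by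
  simp only [params, List.mem_filterMap]
  constructor
  · rintro ⟨s, hs, h⟩
    cases s with
    | s b => simp at h
    | p b => simp at h; subst h; exact hs
  · intro h
    exact ⟨PSym.p a, h, rfl⟩

lemma distinctP_eq (w : List PSym) : distinctP w = (params w).toFinset.card := by
  rw [distinctP, params, List.card_toFinset]

lemma penc_concat (w : List PSym) (c : PSym) :
    penc (w ++ [c]) = penc w ++ [pencSym (w ++ [c]) w.length] := by
  have h1 : (penc (w ++ [c])).take w.length = penc w := by
    rw [penc_take, List.take_left']
    rfl
  have h2 : (penc (w ++ [c])).length = w.length + 1 := by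
    simp [penc_length]
  conv_lhs => rw [← List.take_append_drop w.length (penc (w ++ [c]))]
  rw [h1]
  congr 1
  have h3 : (penc (w ++ [c]))[w.length]? = some (pencSym (w ++ [c]) w.length) :=
    penc_getElem?_of_lt _ _ (by simp)
  rw [List.drop_eq_getElem_cons (show w.length < (penc (w ++ [c])).length by omega)]
  have h5 : List.drop (w.length + 1) (penc (w ++ [c])) = [] :=
    List.drop_eq_nil_of_le (by omega)
  rw [h5]
  congr 1
  have := List.getElem?_eq_getElem (l := penc (w ++ [c])) (i := w.length) (by omega)
  rw [this] at h3
  exact (Option.some_inj.mp h3)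

lemma count_inf_penc (w : List PSym) : (penc w).count Enc.inf = distinctP w := by
  induction w using List.reverseRecOn with
  | nil => rfl
  | append_singleton w c ih =>
    rw [penc_concat, List.count_append, ih]
    cases c with
    | s b =>
      have : pencSym (w ++ [PSym.s b]) w.length = Enc.s b := by
        unfold pencSym
        rw [List.getElem?_append_right le_rfl]
        simp
      rw [this]
      have hpw : params (w ++ [PSym.s b]) = params w := by simp [params]
      rw [distinctP_eq, distinctP_eq, hpw]
      simp
    | p b =>
      have hget : (w ++ [PSym.p b])[w.length]? = some (PSym.p b) := by
        rw [List.getElem?_append_right le_rfl]; simp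
      have hmem : ∀ j < w.length, (w ++ [PSym.p b])[j]? = w[j]? := by
        intro j hj; rw [List.getElem?_append, if_pos hj]
      rw [distinctP_eq, distinctP_eq]
      have hpw : params (w ++ [PSym.p b]) = params w ++ [b] := by simp [params]
      rw [hpw, List.toFinset_append]
      have hsing : ([b] : List ℕ).toFinset = {b} := rfl
      rw [hsing]
      by_cases hb : PSym.p b ∈ w
      · obtain ⟨j, hjlen, hj⟩ := List.getElem_of_mem hb
        have hne : prevOcc (w ++ [PSym.p b]) w.length ≠ none := by
          intro hn
          rw [prevOcc_eq_none_iff] at hn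
          exact hn j hjlen
            (by rw [hmem j hjlen, hget, List.getElem?_eq_getElem hjlen, hj])
        obtain ⟨j', hj'⟩ := Option.ne_none_iff_exists'.mp hne
        have hps : pencSym (w ++ [PSym.p b]) w.length = Enc.fin (w.length - j') := by
          unfold pencSym; rw [hget, hj']
        rw [hps]
        have hbmem : b ∈ (params w).toFinset := by
          rw [List.mem_toFinset, mem_params]; exact hb
        rw [Finset.union_eq_left.mpr (Finset.singleton_subset_iff.mpr hbmem)]
        simp
      · have hnone : prevOcc (w ++ [PSym.p b]) w.length = none := by
          rw [prevOcc_eq_none_iff]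
          intro j hj hcontra
          rw [hmem j hj, hget] at hcontra
          obtain ⟨hlt, heq⟩ := List.getElem?_eq_some_iff.mp hcontra
          exact hb (heq ▸ List.getElem_mem _)
        have hps : pencSym (w ++ [PSym.p b]) w.length = Enc.inf := by
          unfold pencSym; rw [hget, hnone]
        rw [hps]
        have hbmem : b ∉ (params w).toFinset := by
          rw [List.mem_toFinset, mem_params]; exact hb
        rw [Finset.union_comm, ← Finset.insert_eq, Finset.card_insert_of_notMem hbmem]
        simp

/- ===== lcp and Lex lemmas ===== -/

lemma lcp_le_length_left {α : Type*} [DecidableEq α] :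
    ∀ (l₁ l₂ : List α), lcp l₁ l₂ ≤ l₁.length ∧ lcp l₁ l₂ ≤ l₂.length
  | [], l₂ => by simp [lcp]
  | a :: x, [] => by simp [lcp]
  | a :: x, b :: y => by
    rw [lcp]
    split
    · have := lcp_le_length_left x y
      constructor <;> simp <;> omega
    · simp

lemma take_lcp_eq {α : Type*} [DecidableEq α] :
    ∀ (l₁ l₂ : List α), l₁.take (lcp l₁ l₂) = l₂.take (lcp l₁ l₂)
  | [], l₂ => by simp [lcp]
  | a :: x, [] => by simp [lcp]
  | a :: x, b :: y => by
    rw [lcp]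
    split
    · rename_i h
      rw [List.take_succ_cons, List.take_succ_cons, h, take_lcp_eq x y]
    · simp

lemma lcp_eq_of {α : Type*} [DecidableEq α] :
    ∀ (n : ℕ) (l₁ l₂ : List α), l₁.take n = l₂.take n → l₁[n]? ≠ l₂[n]? →
      lcp l₁ l₂ = n
  | 0, [], [] => by simp
  | 0, [], b :: y => by intros; rfl
  | 0, a :: x, [] => by intros; rfl
  | 0, a :: x, b :: y => by
    intro _ hne
    simp only [List.getElem?_cons_zero, ne_eq, Option.some_inj] at hne
    rw [lcp, if_neg hne]
  | n + 1, [], l₂ => by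
    intro ht hne
    exfalso
    apply hne
    rw [List.getElem?_eq_none (by simp), List.getElem?_eq_none]
    have : l₂.take (n+1) = [] := ht.symm
    have := List.take_eq_nil_iff.mp this
    rcases this with h | h
    · omega
    · simp [h]
  | n + 1, a :: x, [] => by intro ht _; simp at ht
  | n + 1, a :: x, b :: y => by
    intro ht hne
    simp only [List.take_succ_cons, List.cons.injEq] at ht
    rw [lcp, if_pos ht.1, lcp_eq_of n x y ht.2 (by simpa using hne)]

lemma getElem?_lcp_ne {α : Type*} [DecidableEq α] :
    ∀ (l₁ l₂ : List α), l₁ ≠ l₂ → l₁[lcp l₁ l₂]? ≠ l₂[lcp l₁ l₂]?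
  | [], [], h => absurd rfl h
  | [], b :: y, _ => by simp [lcp]
  | a :: x, [], _ => by simp [lcp]
  | a :: x, b :: y, h => by
    by_cases hab : a = b
    · subst hab
      have hxy : x ≠ y := fun hh => h (by rw [hh])
      rw [lcp, if_pos rfl]
      simpa using getElem?_lcp_ne x y hxy
    · rw [lcp, if_neg hab]
      simpa using hab

/-- Comparison of optional symbols: `none < some`. -/
def optLt {α : Type*} [LT α] : Option α → Option α → Prop
  | none, some _ => True
  | some u, some v => u < v
  | _, _ => False

lemma lex_of_optLt {α : Type*} [LinearOrder α] [DecidableEq α] :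
    ∀ (n : ℕ) (l₁ l₂ : List α), l₁.take n = l₂.take n → optLt l₁[n]? l₂[n]? →
      List.Lex (· < ·) l₁ l₂
  | n, [], [] => by intro _ h; simp [optLt, List.getElem?_eq_none] at h
  | n, [], b :: y => by intro _ _; exact List.Lex.nil
  | n, a :: x, [] => by intro _ h; simp [optLt, List.getElem?_eq_none] at h
  | 0, a :: x, b :: y => by
    intro _ h
    exact List.Lex.rel (by simpa [optLt] using h)
  | n + 1, a :: x, b :: y => by
    intro ht h
    simp only [List.take_succ_cons, List.cons.injEq] at ht
    rw [ht.1]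
    exact List.Lex.cons (lex_of_optLt n x y ht.2 (by simpa using h))

lemma optLt_of_lex {α : Type*} [LinearOrder α] [DecidableEq α] :
    ∀ {l₁ l₂ : List α}, List.Lex (· < ·) l₁ l₂ →
      optLt l₁[lcp l₁ l₂]? l₂[lcp l₁ l₂]? := by
  intro l₁ l₂ h
  induction h with
  | nil => simp [lcp, optLt]
  | @rel a x b y hab =>
    rw [lcp, if_neg (ne_of_lt hab)]
    simpa [optLt] using hab
  | @cons a x y hxy ih =>
    rw [lcp, if_pos rfl]
    simpa using ih

lemma optLt_ne {α : Type*} [LinearOrder α] {o₁ o₂ : Option α} (h : optLt o₁ o₂) :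
    o₁ ≠ o₂ := by
  cases o₁ <;> cases o₂ <;> simp_all [optLt]
  exact ne_of_lt h

/- ===== Enc order facts ===== -/

lemma enc_lt_iff (x y : Enc) : x < y ↔ x.toPair < y.toPair := Iff.rfl

lemma Enc.not_inf_lt (z : Enc) : ¬ (Enc.inf < z) := by
  rw [enc_lt_iff]
  cases z <;> simp [Enc.toPair, Prod.Lex.lt_iff]

lemma Enc.s_lt_fin (a d : ℕ) : Enc.s a < Enc.fin d := by
  rw [enc_lt_iff]
  simp [Enc.toPair, Prod.Lex.lt_iff]

lemma Enc.fin_lt_fin {d e : ℕ} (h : d < e) : Enc.fin d < Enc.fin e := by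
  rw [enc_lt_iff]
  simp [Enc.toPair, Prod.Lex.lt_iff, h]

/- ===== indexOf lemmas ===== -/

lemma getElem?_ne_of_lt_indexOf {c : PSym} : ∀ (l : List PSym) (i : ℕ),
    i < l.idxOf c → l[i]? ≠ some c
  | [], i => by simp [List.idxOf]
  | d :: l, i => by
    intro hi
    rw [List.idxOf_cons] at hi
    by_cases hdc : d = c
    · simp [hdc] at hi
    · have hbeq : (d == c) = false := by simp [hdc]
      rw [hbeq, cond_false] at hi
      cases i with
      | zero => simpa using hdc
      | succ i =>
        rw [List.getElem?_cons_succ]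
        exact getElem?_ne_of_lt_indexOf l i (by omega)

lemma not_mem_take_indexOf (l : List PSym) (c : PSym) :
    c ∉ l.take (l.idxOf c) := by
  intro h
  obtain ⟨i, hlen, hi⟩ := List.getElem_of_mem h
  have h1 : l[i]? = some c := by
    rw [List.getElem?_eq_getElem (lt_of_lt_of_le hlen (by
      simpa using (List.length_take_le _ _)))]
    · rw [List.getElem_take] at hi
      exact congrArg some hi
  have h2 : i < l.idxOf c := by
    have := List.length_take_le (l.idxOf c) l
    have : (l.take (l.idxOf c)).length ≤ l.idxOf c := by
      simp [List.length_take]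
    omega
  exact getElem?_ne_of_lt_indexOf l i h2 h1

lemma indexOf_eq_of_fresh {xs : List PSym} {a : ℕ} {i : ℕ}
    (h1 : xs[i]? = some (PSym.p a)) (h2 : prevOcc xs i = none) :
    xs.idxOf (PSym.p a) = i := by
  rcases lt_trichotomy (xs.idxOf (PSym.p a)) i with h | h | h
  · exfalso
    rw [prevOcc_eq_none_iff] at h2
    have hmem : PSym.p a ∈ xs := by
      obtain ⟨hlt, heq⟩ := List.getElem?_eq_some_iff.mp h1
      exact heq ▸ List.getElem_mem _
    have hlen : xs.idxOf (PSym.p a) < xs.length := List.idxOf_lt_length_iff.mpr hmem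
    have : xs[xs.idxOf (PSym.p a)]? = some (PSym.p a) := by
      rw [List.getElem?_eq_getElem hlen, List.getElem_idxOf hlen]
    exact h2 _ h (by rw [this, h1])
  · exact h
  · exact absurd h1 (getElem?_ne_of_lt_indexOf xs i h)

lemma pencSym_at_indexOf {xs : List PSym} {a : ℕ}
    (h : xs.idxOf (PSym.p a) < xs.length) :
    pencSym xs (xs.idxOf (PSym.p a)) = Enc.inf := by
  have hget : xs[xs.idxOf (PSym.p a)]? = some (PSym.p a) := by
    rw [List.getElem?_eq_getElem h, List.getElem_idxOf h]
  have hnone : prevOcc xs (xs.idxOf (PSym.p a)) = none := by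
    rw [prevOcc_eq_none_iff]
    intro j hj hcontra
    rw [hget] at hcontra
    exact getElem?_ne_of_lt_indexOf xs j hj hcontra
  unfold pencSym
  rw [hget, hnone]

lemma fceRank_cons_p (a : ℕ) (xs : List PSym) :
    fceRank (PSym.p a :: xs) = distinctP (xs.take (xs.idxOf (PSym.p a))) + 1 := by
  rw [show fceRank (PSym.p a :: xs) = distinctP ((PSym.p a :: xs).take
    (min (PSym.p a :: xs).length (2 + xs.idxOf (PSym.p a)))) from rfl]
  by_cases hmem : PSym.p a ∈ xs
  · have hidx : xs.idxOf (PSym.p a) < xs.length := List.idxOf_lt_length_iff.mpr hmem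
    have hmin : min (PSym.p a :: xs).length (2 + xs.idxOf (PSym.p a)) =
        2 + xs.idxOf (PSym.p a) := by
      simp only [List.length_cons]; omega
    rw [hmin]
    have htake1 : (PSym.p a :: xs).take (2 + xs.idxOf (PSym.p a)) =
        PSym.p a :: xs.take (xs.idxOf (PSym.p a) + 1) := by
      rw [show 2 + xs.idxOf (PSym.p a) = (xs.idxOf (PSym.p a) + 1) + 1 by omega,
        List.take_succ_cons]
    have htake2 : xs.take (xs.idxOf (PSym.p a) + 1) =
        xs.take (xs.idxOf (PSym.p a)) ++ [PSym.p a] := by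
      rw [List.take_succ, List.getElem?_eq_getElem hidx, List.getElem_idxOf hidx]
      rfl
    rw [htake1, htake2, distinctP_eq, distinctP_eq]
    have hparams : params (PSym.p a :: (xs.take (xs.idxOf (PSym.p a)) ++ [PSym.p a])) =
        a :: (params (xs.take (xs.idxOf (PSym.p a))) ++ [a]) := by
      simp [params]
    rw [hparams]
    have hnotmem : a ∉ (params (xs.take (xs.idxOf (PSym.p a)))).toFinset := by
      rw [List.mem_toFinset, mem_params]
      exact not_mem_take_indexOf xs (PSym.p a)
    have : (a :: (params (xs.take (xs.idxOf (PSym.p a))) ++ [a])).toFinset =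
        insert a (params (xs.take (xs.idxOf (PSym.p a)))).toFinset := by
      ext x; simp
    rw [this, Finset.card_insert_of_notMem hnotmem]
  · have hidx : xs.idxOf (PSym.p a) = xs.length := List.idxOf_eq_length_iff.mpr hmem
    have hmin : min (PSym.p a :: xs).length (2 + xs.idxOf (PSym.p a)) =
        (PSym.p a :: xs).length := by
      simp only [List.length_cons]; omega
    rw [hmin, List.take_length, hidx, List.take_length, distinctP_eq, distinctP_eq]
    have hparams : params (PSym.p a :: xs) = a :: params xs := by simp [params]
    rw [hparams]
    have hnotmem : a ∉ (params xs).toFinset := by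
      rw [List.mem_toFinset, mem_params]; exact hmem
    rw [List.toFinset_cons, Finset.card_insert_of_notMem hnotmem]

lemma count_take_succ_le {α : Type*} [DecidableEq α] (l : List α) (x : α) (i L : ℕ)
    (hiL : i < L) (hx : l[i]? = some x) :
    (l.take i).count x + 1 ≤ (l.take L).count x := by
  have h1 : l.take (i+1) = l.take i ++ [x] := by
    rw [List.take_succ, hx]; rfl
  have h2 : (l.take (i+1)).count x = (l.take i).count x + 1 := by
    rw [h1, List.count_append]; simp
  have h3 : List.Sublist (l.take (i+1)) (l.take L) := by
    rw [show l.take (i+1) = (l.take L).take (i+1) by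
      rw [List.take_take]; congr 1; omega]
    exact List.take_sublist _ _
  calc (l.take i).count x + 1 = (l.take (i+1)).count x := h2.symm
    _ ≤ (l.take L).count x := h3.count_le x

lemma penc_cons (c : PSym) (w : List PSym) :
    penc (c :: w) = pencSym (c :: w) 0 ::
      (List.range w.length).map (fun i => pencSym (c :: w) (i + 1)) := by
  unfold penc
  rw [List.length_cons, List.range_succ_eq_map, List.map_cons, List.map_map]
  rfl

lemma pencSym_p_zero (a : ℕ) (w : List PSym) :
    pencSym (PSym.p a :: w) 0 = Enc.inf := by
  unfold pencSym prevOcc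
  simp

lemma pencSym_lt_fin_succ {xs : List PSym} {L : ℕ} (h : L < xs.length)
    (hne : pencSym xs L ≠ Enc.inf) : pencSym xs L < Enc.fin (L + 1) := by
  have hg : xs[L]? = some xs[L] := List.getElem?_eq_getElem h
  unfold pencSym at hne ⊢
  rw [hg] at hne ⊢
  cases hs : xs[L] with
  | s c => exact Enc.s_lt_fin c (L+1)
  | p c =>
    cases hp : prevOcc xs L with
    | some j =>
      have hj := (prevOcc_eq_some_iff xs L j).mp hp
      exact Enc.fin_lt_fin (by omega)
    | none => rw [hs, hp] at hne; exact absurd rfl hne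

lemma lcp_cons_self {α : Type*} [DecidableEq α] (c : α) (x y : List α) :
    lcp (c :: x) (c :: y) = lcp x y + 1 := by
  rw [lcp, if_pos rfl]


/-- Case (B4): both strings start with p-symbols, ⟨x[2..]⟩ < ⟨y[2..]⟩ and
e = lcp∞(⟨x[2..]⟩,⟨y[2..]⟩) < min{fce(x), fce(y)}. -/
theorem stmt8 (a b : ℕ) (xs ys : List PSym)
    (hlt : lexLt (penc xs) (penc ys))
    (e : ℕ) (he : e = lcpInf (penc xs) (penc ys))
    (hx : e < fceRank (PSym.p a :: xs)) (hy : e < fceRank (PSym.p b :: ys)) :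
    lexLt (penc (PSym.p a :: xs)) (penc (PSym.p b :: ys)) ∧
    lcp (penc (PSym.p a :: xs)) (penc (PSym.p b :: ys)) =
      lcp (penc xs) (penc ys) + 1 ∧
    lcpInf (penc (PSym.p a :: xs)) (penc (PSym.p b :: ys)) = e + 1 := by
  have hlex : List.Lex (· < ·) (penc xs) (penc ys) := hlt
  set L := lcp (penc xs) (penc ys) with hLdef
  have hlens := lcp_le_length_left (penc xs) (penc ys)
  have hxlen : L ≤ xs.length := by
    have := hlens.1; rwa [penc_length] at this
  have hylen : L ≤ ys.length := by
    have := hlens.2; rwa [penc_length] at this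
  have htake : (penc xs).take L = (penc ys).take L := take_lcp_eq _ _
  have hopt : optLt (penc xs)[L]? (penc ys)[L]? := optLt_of_lex hlex
  have he' : e = ((penc xs).take L).count Enc.inf := he
  have he'' : e = ((penc ys).take L).count Enc.inf := by rw [he', htake]
  have hcount_take : ∀ (zs : List PSym) (k : ℕ),
      ((penc zs).take k).count Enc.inf = distinctP (zs.take k) := by
    intro zs k; rw [penc_take, count_inf_penc]
  have hiaL : ¬ xs.idxOf (PSym.p a) < L := by
    intro h
    have hlt_len : xs.idxOf (PSym.p a) < xs.length := lt_of_lt_of_le h hxlen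
    have hinf : (penc xs)[xs.idxOf (PSym.p a)]? = some Enc.inf := by
      rw [penc_getElem?_of_lt _ _ hlt_len, pencSym_at_indexOf hlt_len]
    have h1 := count_take_succ_le (penc xs) Enc.inf _ L h hinf
    rw [fceRank_cons_p, ← hcount_take xs] at hx
    rw [← he'] at h1
    omega
  have hibL : ¬ ys.idxOf (PSym.p b) < L := by
    intro h
    have hlt_len : ys.idxOf (PSym.p b) < ys.length := lt_of_lt_of_le h hylen
    have hinf : (penc ys)[ys.idxOf (PSym.p b)]? = some Enc.inf := by
      rw [penc_getElem?_of_lt _ _ hlt_len, pencSym_at_indexOf hlt_len]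
    have h1 := count_take_succ_le (penc ys) Enc.inf _ L h hinf
    rw [fceRank_cons_p, ← hcount_take ys] at hy
    rw [← he''] at h1
    omega
  have hxeq : ∀ i, i < L → pencSym (PSym.p a :: xs) (i + 1) = pencSym xs i := by
    intro i hi
    apply pencSym_cons_succ_of
    rintro ⟨h1, h2⟩
    exact hiaL (by rw [indexOf_eq_of_fresh h1 h2]; exact hi)
  have hyeq : ∀ i, i < L → pencSym (PSym.p b :: ys) (i + 1) = pencSym ys i := by
    intro i hi
    apply pencSym_cons_succ_of
    rintro ⟨h1, h2⟩
    exact hibL (by rw [indexOf_eq_of_fresh h1 h2]; exact hi)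
  set tx := (List.range xs.length).map (fun i => pencSym (PSym.p a :: xs) (i + 1)) with htx
  set ty := (List.range ys.length).map (fun i => pencSym (PSym.p b :: ys) (i + 1)) with hty
  have hpx : penc (PSym.p a :: xs) = Enc.inf :: tx := by
    rw [penc_cons, pencSym_p_zero]
  have hpy : penc (PSym.p b :: ys) = Enc.inf :: ty := by
    rw [penc_cons, pencSym_p_zero]
  have htx_take : tx.take L = (penc xs).take L := by
    rw [htx]
    conv_rhs => rw [penc]
    rw [← List.map_take, List.take_range, ← List.map_take, List.take_range]
    apply List.map_congr_left
    intro i hi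
    rw [List.mem_range] at hi
    exact hxeq i (lt_of_lt_of_le hi (min_le_left _ _))
  have hty_take : ty.take L = (penc ys).take L := by
    rw [hty]
    conv_rhs => rw [penc]
    rw [← List.map_take, List.take_range, ← List.map_take, List.take_range]
    apply List.map_congr_left
    intro i hi
    rw [List.mem_range] at hi
    exact hyeq i (lt_of_lt_of_le hi (min_le_left _ _))
  have htxty : tx.take L = ty.take L := by rw [htx_take, htake, hty_take]
  have hoptT : optLt tx[L]? ty[L]? := by
    cases hx0 : (penc xs)[L]? with
    | none =>
      have hLx : xs.length ≤ L := by
        by_contra hc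
        rw [penc_getElem?_of_lt _ _ (by omega)] at hx0
        exact (Option.some_ne_none _) hx0
      have htxnone : tx[L]? = none := by
        apply List.getElem?_eq_none
        rw [htx]
        simp only [List.length_map, List.length_range]
        exact hLx
      cases hy0 : (penc ys)[L]? with
      | none => rw [hx0, hy0] at hopt; exact absurd hopt (by simp [optLt])
      | some v =>
        have hLylt : L < ys.length := by
          by_contra hc
          rw [List.getElem?_eq_none (by rw [penc_length]; omega)] at hy0
          simp at hy0
        have htyL : ty[L]? = some (pencSym (PSym.p b :: ys) (L + 1)) := by
          rw [hty, List.getElem?_map, List.getElem?_range hLylt]; rfl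
        rw [htxnone, htyL]
        exact trivial
    | some u =>
      cases hy0 : (penc ys)[L]? with
      | none => rw [hx0, hy0] at hopt; exact absurd hopt (by simp [optLt])
      | some v =>
        have huv : u < v := by rw [hx0, hy0] at hopt; exact hopt
        have hLxlt : L < xs.length := by
          by_contra hc
          rw [List.getElem?_eq_none (by rw [penc_length]; omega)] at hx0
          simp at hx0
        have hLylt : L < ys.length := by
          by_contra hc
          rw [List.getElem?_eq_none (by rw [penc_length]; omega)] at hy0
          simp at hy0
        have hu : pencSym xs L = u := by
          rw [penc_getElem?_of_lt _ _ hLxlt] at hx0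
          exact Option.some_inj.mp hx0
        have hv : pencSym ys L = v := by
          rw [penc_getElem?_of_lt _ _ hLylt] at hy0
          exact Option.some_inj.mp hy0
        have hune : pencSym xs L ≠ Enc.inf := by
          intro hh
          rw [hh] at hu
          rw [← hu] at huv
          exact Enc.not_inf_lt v huv
        have hxcond : ¬ (xs[L]? = some (PSym.p a) ∧ prevOcc xs L = none) := by
          rintro ⟨h1, h2⟩
          have hia := indexOf_eq_of_fresh h1 h2
          have : pencSym xs (xs.idxOf (PSym.p a)) = Enc.inf :=
            pencSym_at_indexOf (by rw [hia]; exact hLxlt)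
          rw [hia] at this
          exact hune this
        have htxL : tx[L]? = some u := by
          rw [htx, List.getElem?_map, List.getElem?_range hLxlt]
          simp only [Option.map_some]
          rw [pencSym_cons_succ_of _ _ _ hxcond, hu]
        by_cases hyfr : ys[L]? = some (PSym.p b) ∧ prevOcc ys L = none
        · have htyL : ty[L]? = some (Enc.fin (L + 1)) := by
            rw [hty, List.getElem?_map, List.getElem?_range hLylt]
            simp only [Option.map_some]
            rw [pencSym_cons_succ_fresh b ys L hyfr.1 hyfr.2]
          rw [htxL, htyL]
          show u < Enc.fin (L + 1)
          rw [← hu]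
          exact pencSym_lt_fin_succ hLxlt hune
        · have htyL : ty[L]? = some v := by
            rw [hty, List.getElem?_map, List.getElem?_range hLylt]
            simp only [Option.map_some]
            rw [pencSym_cons_succ_of _ _ _ hyfr, hv]
          rw [htxL, htyL]
          exact huv
  have hlexT : List.Lex (· < ·) tx ty := lex_of_optLt L tx ty htxty hoptT
  have hlcpT : lcp tx ty = L := lcp_eq_of L tx ty htxty (optLt_ne hoptT)
  refine ⟨?_, ?_, ?_⟩
  · show List.Lex (· < ·) (penc (PSym.p a :: xs)) (penc (PSym.p b :: ys))
    rw [hpx, hpy]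
    exact List.Lex.cons hlexT
  · rw [hpx, hpy, lcp_cons_self, hlcpT]
  · rw [lcpInf, hpx, hpy, lcp_cons_self, hlcpT, List.take_succ_cons,
      List.count_cons_self, htx_take, ← he']
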